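/- Fix $\sigma \ge 0$ and let $u, v \in \ell^2(\mathbb{Z})$. Then $\Big\| \sum_{\xi_1+\xi_2 = \xi} \frac{\langle\xi_2\rangle^{\sigma}}{\langle\xi_1\rangle^{\sigma+1}}\,\big(\operatorname{sgn}(\xi) - \operatorname{sgn}(\xi_2)\big)\, u(\xi_1)\, v(\xi_2) \Big\|_{\ell^2_\xi} \le C\, \|u\|_{\ell^2}\, \|v\|_{\ell^2}$ for a constant $C>0$ independent of $u,v$ (but possibly depending on $\sigma$). -/

import Mathlib

open Complex
open scoped ENNReal

set_option maxHeartbeats 1000000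

/-- Japanese bracket `⟨ξ⟩ = (1 + ξ²)^{1/2}` on the integers. -/
noncomputable def jap (ξ : ℤ) : ℝ := Real.sqrt (1 + (ξ : ℝ) ^ 2)

lemma one_le_jap (ξ : ℤ) : 1 ≤ jap ξ := by
  have h : (1:ℝ) ≤ 1 + (ξ:ℝ)^2 := by nlinarith [sq_nonneg ((ξ:ℝ))]
  have := Real.sqrt_le_sqrt h
  simpa [jap] using this

lemma jap_pos (ξ : ℤ) : 0 < jap ξ := lt_of_lt_of_le one_pos (one_le_jap ξ)

lemma jap_zero : jap 0 = 1 := by simp [jap]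

lemma jap_sq (ξ : ℤ) : jap ξ ^ 2 = 1 + (ξ:ℝ)^2 := by
  have : (0:ℝ) ≤ 1 + (ξ:ℝ)^2 := by positivity
  simp [jap, Real.sq_sqrt this]

lemma jap_mono {a b : ℤ} (h : |a| ≤ |b|) : jap a ≤ jap b := by
  have h2 : (a:ℝ)^2 ≤ (b:ℝ)^2 := by
    have : a^2 ≤ b^2 := by
      calc a^2 = |a|^2 := (_root_.sq_abs a).symm
      _ ≤ |b|^2 := by exact pow_le_pow_left₀ (abs_nonneg a) h 2
      _ = b^2 := _root_.sq_abs b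
    exact_mod_cast this
  exact Real.sqrt_le_sqrt (by linarith)

lemma abs_sign_le (n : ℤ) : |Int.sign n| ≤ 1 := by
  rcases lt_trichotomy n 0 with h | h | h
  · simp [Int.sign_eq_neg_one_of_neg h]
  · simp [h]
  · simp [Int.sign_eq_one_of_pos h]

lemma key_abs {ξ ξ₁ : ℤ} (h : Int.sign ξ ≠ Int.sign (ξ - ξ₁)) (h2 : ξ - ξ₁ ≠ 0) :
    |ξ - ξ₁| ≤ |ξ₁| := by
  rcases lt_trichotomy (ξ - ξ₁) 0 with hn | hz | hp
  · have hs : Int.sign (ξ - ξ₁) = -1 := Int.sign_eq_neg_one_of_neg hn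
    have hξ : 0 ≤ ξ := by
      by_contra hc
      push_neg at hc
      exact h ((Int.sign_eq_neg_one_of_neg hc).trans hs.symm)
    have h1 : 0 < ξ₁ := by omega
    rw [abs_of_neg hn, abs_of_pos h1]
    omega
  · exact absurd hz h2
  · have hs : Int.sign (ξ - ξ₁) = 1 := Int.sign_eq_one_of_pos hp
    have hξ : ξ ≤ 0 := by
      by_contra hc
      push_neg at hc
      exact h ((Int.sign_eq_one_of_pos hc).trans hs.symm)
    have h1 : ξ₁ < 0 := by omega
    rw [abs_of_pos hp, abs_of_neg h1]
    omega

lemma kernel_bound (σ : ℝ) (hσ : 0 ≤ σ) (ξ ξ₁ : ℤ) :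
    |jap (ξ - ξ₁) ^ σ / jap ξ₁ ^ (σ + 1) * ((Int.sign ξ - Int.sign (ξ - ξ₁) : ℤ) : ℝ)|
      ≤ 2 * (jap ξ₁)⁻¹ := by
  by_cases hs : Int.sign ξ = Int.sign (ξ - ξ₁)
  · rw [hs]
    have := jap_pos ξ₁
    simp
    positivity
  · have hsabs : |((Int.sign ξ - Int.sign (ξ - ξ₁) : ℤ) : ℝ)| ≤ 2 := by
      have : |Int.sign ξ - Int.sign (ξ - ξ₁)| ≤ 2 := by
        calc |Int.sign ξ - Int.sign (ξ - ξ₁)| ≤ |Int.sign ξ| + |Int.sign (ξ - ξ₁)| := abs_sub _ _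
        _ ≤ 2 := by have := abs_sign_le ξ; have := abs_sign_le (ξ - ξ₁); omega
      calc |((Int.sign ξ - Int.sign (ξ - ξ₁) : ℤ) : ℝ)| = (|Int.sign ξ - Int.sign (ξ - ξ₁)| : ℤ) := by
            rw [← Int.cast_abs]
      _ ≤ ((2:ℤ) : ℝ) := by exact_mod_cast this
      _ = 2 := by norm_num
    have hnum : jap (ξ - ξ₁) ^ σ ≤ jap ξ₁ ^ σ := by
      by_cases h2 : ξ - ξ₁ = 0
      · rw [h2, jap_zero, Real.one_rpow]
        exact Real.one_le_rpow (one_le_jap ξ₁) hσ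
      · exact Real.rpow_le_rpow (Real.sqrt_nonneg _) (jap_mono (key_abs hs h2)) hσ
    have hpos : 0 < jap ξ₁ := jap_pos ξ₁
    have hfrac : jap (ξ - ξ₁) ^ σ / jap ξ₁ ^ (σ + 1) ≤ (jap ξ₁)⁻¹ := by
      have h1 : jap (ξ - ξ₁) ^ σ / jap ξ₁ ^ (σ + 1) ≤ jap ξ₁ ^ σ / jap ξ₁ ^ (σ + 1) := by
        gcongr
      have h2 : jap ξ₁ ^ σ / jap ξ₁ ^ (σ + 1) = (jap ξ₁)⁻¹ := by
        rw [← Real.rpow_sub hpos]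
        norm_num [Real.rpow_neg_one]
      linarith
    have hfnn : 0 ≤ jap (ξ - ξ₁) ^ σ / jap ξ₁ ^ (σ + 1) := by
      apply div_nonneg <;> exact Real.rpow_nonneg (Real.sqrt_nonneg _) _
    calc |jap (ξ - ξ₁) ^ σ / jap ξ₁ ^ (σ + 1) * ((Int.sign ξ - Int.sign (ξ - ξ₁) : ℤ) : ℝ)|
        = (jap (ξ - ξ₁) ^ σ / jap ξ₁ ^ (σ + 1)) * |((Int.sign ξ - Int.sign (ξ - ξ₁) : ℤ) : ℝ)| := by
          rw [abs_mul, _root_.abs_of_nonneg hfnn]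
      _ ≤ (jap ξ₁)⁻¹ * 2 :=
          mul_le_mul hfrac hsabs (abs_nonneg _) (inv_nonneg.mpr hpos.le)
      _ = 2 * (jap ξ₁)⁻¹ := mul_comm _ _

lemma tsum_CS (f g : ℤ → ℝ≥0∞) :
    ∑' i, f i * g i ≤ (∑' i, f i ^ (2:ℝ)) ^ ((1:ℝ)/2) * (∑' i, g i ^ (2:ℝ)) ^ ((1:ℝ)/2) := by
  rw [ENNReal.tsum_eq_iSup_sum]
  refine iSup_le fun s => ?_
  have hpq : Real.HolderConjugate 2 2 := Real.HolderConjugate.two_two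
  calc ∑ i ∈ s, f i * g i
      ≤ (∑ i ∈ s, f i ^ (2:ℝ)) ^ ((1:ℝ)/2) * (∑ i ∈ s, g i ^ (2:ℝ)) ^ ((1:ℝ)/2) :=
        ENNReal.inner_le_Lp_mul_Lq s f g hpq
    _ ≤ _ := by
        apply mul_le_mul'
        · exact ENNReal.rpow_le_rpow (ENNReal.sum_le_tsum s) (by norm_num)
        · exact ENNReal.rpow_le_rpow (ENNReal.sum_le_tsum s) (by norm_num)

lemma tsum_weight (w f : ℤ → ℝ≥0∞) :
    ∑' i, w i * f i ≤ (∑' i, w i) ^ ((1:ℝ)/2) * (∑' i, w i * f i ^ (2:ℝ)) ^ ((1:ℝ)/2) := by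
  rw [ENNReal.tsum_eq_iSup_sum]
  refine iSup_le fun s => ?_
  have h := ENNReal.inner_le_weight_mul_Lp_of_nonneg s (p := 2) one_le_two w f
  norm_num at h
  calc ∑ i ∈ s, w i * f i
      ≤ (∑ i ∈ s, w i) ^ ((1:ℝ)/2) * (∑ i ∈ s, w i * f i ^ (2:ℝ)) ^ ((1:ℝ)/2) := by
        convert h using 2 <;> norm_num
    _ ≤ _ := by
        apply mul_le_mul'
        · exact ENNReal.rpow_le_rpow (ENNReal.sum_le_tsum s) (by norm_num)
        · exact ENNReal.rpow_le_rpow (ENNReal.sum_le_tsum s) (by norm_num)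

lemma sq_of_le (a b c : ℝ≥0∞) (h : a ≤ b ^ ((1:ℝ)/2) * c ^ ((1:ℝ)/2)) :
    a ^ (2:ℝ) ≤ b * c := by
  have h2 := ENNReal.rpow_le_rpow h (by norm_num : (0:ℝ) ≤ 2)
  calc a ^ (2:ℝ) ≤ (b ^ ((1:ℝ)/2) * c ^ ((1:ℝ)/2)) ^ (2:ℝ) := h2
    _ = b * c := by
        rw [ENNReal.mul_rpow_of_nonneg _ _ (by norm_num : (0:ℝ) ≤ 2),
          ← ENNReal.rpow_mul, ← ENNReal.rpow_mul]
        norm_num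

lemma rpow_two' (x : ℝ≥0∞) : x ^ (2:ℝ) = x * x := by
  rw [show (2:ℝ) = ((2:ℕ):ℝ) by norm_num, ENNReal.rpow_natCast]
  ring

lemma conv_sq (W V : ℤ → ℝ≥0∞) :
    ∑' ξ : ℤ, (∑' ξ₁ : ℤ, W ξ₁ * V (ξ - ξ₁)) ^ (2:ℝ)
      ≤ ((∑' i, W i) * ∑' i, W i) * ∑' i, V i ^ (2:ℝ) := by
  have step1 : ∀ ξ : ℤ, (∑' ξ₁, W ξ₁ * V (ξ - ξ₁)) ^ (2:ℝ)
      ≤ (∑' i, W i) * ∑' ξ₁, W ξ₁ * V (ξ - ξ₁) ^ (2:ℝ) :=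
    fun ξ => sq_of_le _ _ _ (tsum_weight W (fun ξ₁ => V (ξ - ξ₁)))
  calc ∑' ξ : ℤ, (∑' ξ₁ : ℤ, W ξ₁ * V (ξ - ξ₁)) ^ (2:ℝ)
      ≤ ∑' ξ : ℤ, (∑' i, W i) * ∑' ξ₁, W ξ₁ * V (ξ - ξ₁) ^ (2:ℝ) :=
        ENNReal.tsum_le_tsum step1
    _ = (∑' i, W i) * ∑' ξ : ℤ, ∑' ξ₁ : ℤ, W ξ₁ * V (ξ - ξ₁) ^ (2:ℝ) :=
        ENNReal.tsum_mul_left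
    _ = (∑' i, W i) * ∑' ξ₁ : ℤ, ∑' ξ : ℤ, W ξ₁ * V (ξ - ξ₁) ^ (2:ℝ) := by
        rw [ENNReal.tsum_comm]
    _ = (∑' i, W i) * ∑' ξ₁ : ℤ, W ξ₁ * ∑' ξ : ℤ, V (ξ - ξ₁) ^ (2:ℝ) := by
        congr 1
        exact tsum_congr fun ξ₁ => ENNReal.tsum_mul_left
    _ = (∑' i, W i) * ∑' ξ₁ : ℤ, W ξ₁ * ∑' η : ℤ, V η ^ (2:ℝ) := by
        congr 1
        refine tsum_congr fun ξ₁ => ?_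
        congr 1
        exact (Equiv.subRight ξ₁).tsum_eq (fun η => V η ^ (2:ℝ))
    _ = ((∑' i, W i) * ∑' i, W i) * ∑' i, V i ^ (2:ℝ) := by
        rw [ENNReal.tsum_mul_right]
        ring

lemma summable_inv_one_add_sq : Summable (fun ξ : ℤ => ((1:ℝ) + (ξ:ℝ)^2)⁻¹) := by
  have hnat : Summable (fun n : ℕ => ((1:ℝ) + (n:ℝ)^2)⁻¹) := by
    have h0 : Summable (fun n : ℕ => 1 / ((n:ℝ))^2) := by
      have := Real.summable_one_div_nat_pow (p := 2)
      exact this.mpr one_lt_two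
    have h1 : Summable (fun n : ℕ => 2 * (1 / ((n:ℝ)+1)^2)) := by
      apply Summable.mul_left
      have := (summable_nat_add_iff (f := fun n : ℕ => 1 / ((n:ℝ))^2) 1).mpr h0
      simpa using this
    apply Summable.of_nonneg_of_le (fun n => by positivity) _ h1
    intro n
    rw [show ((1:ℝ)+(n:ℝ)^2)⁻¹ = 1/(1+(n:ℝ)^2) by rw [one_div], mul_one_div,
      div_le_div_iff₀ (by positivity) (by positivity)]
    nlinarith [sq_nonneg ((n:ℝ) - 1)]
  apply Summable.of_nat_of_neg hnat
  simpa using hnat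

theorem stmt2 (σ : ℝ) (hσ : 0 ≤ σ) : ∃ C > 0, ∀ u v : ℤ → ℂ,
    Summable (fun ξ : ℤ => ‖u ξ‖ ^ 2) → Summable (fun ξ : ℤ => ‖v ξ‖ ^ 2) →
    (∑' ξ : ℤ, ‖∑' ξ₁ : ℤ,
        (((jap (ξ - ξ₁) ^ σ / jap ξ₁ ^ (σ + 1))
            * ((Int.sign ξ - Int.sign (ξ - ξ₁) : ℤ) : ℝ) : ℝ) : ℂ)
          * u ξ₁ * v (ξ - ξ₁)‖ ^ 2) ^ ((1:ℝ)/2)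
      ≤ C * (∑' ξ : ℤ, ‖u ξ‖ ^ 2) ^ ((1:ℝ)/2) * (∑' ξ : ℤ, ‖v ξ‖ ^ 2) ^ ((1:ℝ)/2) := by
  have hJ : Summable (fun ξ : ℤ => ((1:ℝ) + (ξ:ℝ)^2)⁻¹) := summable_inv_one_add_sq
  set Jr : ℝ := ∑' ξ : ℤ, ((1:ℝ) + (ξ:ℝ)^2)⁻¹ with hJr
  have hJpos : 0 < Jr := Summable.tsum_pos hJ (fun i => by positivity) 0 (by norm_num)
  refine ⟨2 * Real.sqrt Jr, by positivity, ?_⟩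
  set C : ℝ := 2 * Real.sqrt Jr with hCdef
  have hCpos : 0 < C := by positivity
  have hC2 : C^2 = 4 * Jr := by
    rw [hCdef, mul_pow, Real.sq_sqrt hJpos.le]
    ring
  intro u v hu hv
  set X : ℝ := ∑' ξ : ℤ, ‖u ξ‖ ^ 2 with hX
  set Y : ℝ := ∑' ξ : ℤ, ‖v ξ‖ ^ 2 with hY
  have hXnn : 0 ≤ X := tsum_nonneg (fun _ => by positivity)
  have hYnn : 0 ≤ Y := tsum_nonneg (fun _ => by positivity)
  set term : ℤ → ℤ → ℂ := fun ξ ξ₁ =>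
    (((jap (ξ - ξ₁) ^ σ / jap ξ₁ ^ (σ + 1))
        * ((Int.sign ξ - Int.sign (ξ - ξ₁) : ℤ) : ℝ) : ℝ) : ℂ) * u ξ₁ * v (ξ - ξ₁) with hterm
  set S : ℤ → ℂ := fun ξ => ∑' ξ₁ : ℤ, term ξ ξ₁ with hS
  -- ennreal quantities
  set P : ℤ → ℝ≥0∞ := fun ξ₁ => ENNReal.ofReal (jap ξ₁)⁻¹ with hP
  set U : ℤ → ℝ≥0∞ := fun ξ₁ => ENNReal.ofReal ‖u ξ₁‖ with hU
  set Vn : ℤ → ℝ≥0∞ := fun ξ₁ => ENNReal.ofReal ‖v ξ₁‖ with hVn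
  set W : ℤ → ℝ≥0∞ := fun ξ₁ => P ξ₁ * U ξ₁ with hW
  -- pointwise bound on terms
  have hptR : ∀ ξ ξ₁ : ℤ, ‖term ξ ξ₁‖ ≤ 2 * ((jap ξ₁)⁻¹ * ‖u ξ₁‖ * ‖v (ξ - ξ₁)‖) := by
    intro ξ ξ₁
    have h1 : ‖term ξ ξ₁‖ = |jap (ξ - ξ₁) ^ σ / jap ξ₁ ^ (σ + 1)
        * ((Int.sign ξ - Int.sign (ξ - ξ₁) : ℤ) : ℝ)| * ‖u ξ₁‖ * ‖v (ξ - ξ₁)‖ := by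
      rw [hterm]
      simp only [norm_mul, Complex.norm_real, Real.norm_eq_abs, abs_mul]
    rw [h1]
    have h2 := kernel_bound σ hσ ξ ξ₁
    calc |jap (ξ - ξ₁) ^ σ / jap ξ₁ ^ (σ + 1)
          * ((Int.sign ξ - Int.sign (ξ - ξ₁) : ℤ) : ℝ)| * ‖u ξ₁‖ * ‖v (ξ - ξ₁)‖
        ≤ (2 * (jap ξ₁)⁻¹) * ‖u ξ₁‖ * ‖v (ξ - ξ₁)‖ := by
          apply mul_le_mul_of_nonneg_right _ (norm_nonneg _)
          exact mul_le_mul_of_nonneg_right h2 (norm_nonneg _)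
      _ = 2 * ((jap ξ₁)⁻¹ * ‖u ξ₁‖ * ‖v (ξ - ξ₁)‖) := by ring
  have hptE : ∀ ξ ξ₁ : ℤ, ENNReal.ofReal ‖term ξ ξ₁‖ ≤ 2 * (W ξ₁ * Vn (ξ - ξ₁)) := by
    intro ξ ξ₁
    have hj : (0:ℝ) ≤ (jap ξ₁)⁻¹ := inv_nonneg.mpr (jap_pos ξ₁).le
    calc ENNReal.ofReal ‖term ξ ξ₁‖
        ≤ ENNReal.ofReal (2 * ((jap ξ₁)⁻¹ * ‖u ξ₁‖ * ‖v (ξ - ξ₁)‖)) :=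
          ENNReal.ofReal_le_ofReal (hptR ξ ξ₁)
      _ = 2 * (W ξ₁ * Vn (ξ - ξ₁)) := by
          rw [ENNReal.ofReal_mul (by norm_num : (0:ℝ) ≤ 2),
            ENNReal.ofReal_mul (by positivity), ENNReal.ofReal_mul hj]
          simp [hW, hP, hU, hVn, ENNReal.ofReal_ofNat, mul_assoc]
  -- claim A
  have claimA : ∀ ξ : ℤ, ENNReal.ofReal ‖S ξ‖ ≤ 2 * ∑' ξ₁ : ℤ, W ξ₁ * Vn (ξ - ξ₁) := by
    intro ξ
    by_cases hsum : Summable (fun ξ₁ => term ξ ξ₁)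
    · have hnorm : Summable (fun ξ₁ => ‖term ξ ξ₁‖) := summable_norm_iff.mpr hsum
      calc ENNReal.ofReal ‖S ξ‖
          ≤ ENNReal.ofReal (∑' ξ₁, ‖term ξ ξ₁‖) :=
            ENNReal.ofReal_le_ofReal (norm_tsum_le_tsum_norm hnorm)
        _ = ∑' ξ₁, ENNReal.ofReal ‖term ξ ξ₁‖ :=
            ENNReal.ofReal_tsum_of_nonneg (fun _ => norm_nonneg _) hnorm
        _ ≤ ∑' ξ₁, 2 * (W ξ₁ * Vn (ξ - ξ₁)) := ENNReal.tsum_le_tsum (hptE ξ)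
        _ = 2 * ∑' ξ₁ : ℤ, W ξ₁ * Vn (ξ - ξ₁) := ENNReal.tsum_mul_left
    · have : S ξ = 0 := tsum_eq_zero_of_not_summable hsum
      simp [this]
  -- the main ennreal estimate
  have hPsum : ∑' ξ₁ : ℤ, P ξ₁ ^ (2:ℝ) = ENNReal.ofReal Jr := by
    rw [hJr]
    rw [ENNReal.ofReal_tsum_of_nonneg (fun i => by positivity) hJ]
    refine tsum_congr fun ξ₁ => ?_
    rw [rpow_two', hP, ← ENNReal.ofReal_mul (inv_nonneg.mpr (jap_pos ξ₁).le)]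
    congr 1
    rw [← mul_inv]
    congr 1
    have := jap_sq ξ₁
    nlinarith [jap_pos ξ₁]
  have hUsum : ∑' ξ₁ : ℤ, U ξ₁ ^ (2:ℝ) = ENNReal.ofReal X := by
    rw [hX, ENNReal.ofReal_tsum_of_nonneg (fun i => by positivity) hu]
    refine tsum_congr fun ξ₁ => ?_
    rw [rpow_two', hU, ← ENNReal.ofReal_mul (norm_nonneg _)]
    congr 1
    ring
  have hVsum : ∑' ξ₁ : ℤ, Vn ξ₁ ^ (2:ℝ) = ENNReal.ofReal Y := by
    rw [hY, ENNReal.ofReal_tsum_of_nonneg (fun i => by positivity) hv]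
    refine tsum_congr fun ξ₁ => ?_
    rw [rpow_two', hVn, ← ENNReal.ofReal_mul (norm_nonneg _)]
    congr 1
    ring
  have hWsq : (∑' i, W i) * (∑' i, W i) ≤ ENNReal.ofReal Jr * ENNReal.ofReal X := by
    have h := tsum_CS P U
    have h2 := sq_of_le _ _ _ h
    rw [rpow_two'] at h2
    rw [← hPsum, ← hUsum]
    exact h2
  have hmainE : ∑' ξ : ℤ, ENNReal.ofReal (‖S ξ‖^2)
      ≤ ENNReal.ofReal (C^2) * ENNReal.ofReal X * ENNReal.ofReal Y := by
    have step : ∀ ξ : ℤ, ENNReal.ofReal (‖S ξ‖^2)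
        ≤ 4 * (∑' ξ₁ : ℤ, W ξ₁ * Vn (ξ - ξ₁)) ^ (2:ℝ) := by
      intro ξ
      have h1 : ENNReal.ofReal (‖S ξ‖^2) = ENNReal.ofReal ‖S ξ‖ * ENNReal.ofReal ‖S ξ‖ := by
        rw [← ENNReal.ofReal_mul (norm_nonneg _)]
        congr 1
        ring
      rw [h1, rpow_two']
      calc ENNReal.ofReal ‖S ξ‖ * ENNReal.ofReal ‖S ξ‖
          ≤ (2 * ∑' ξ₁ : ℤ, W ξ₁ * Vn (ξ - ξ₁)) * (2 * ∑' ξ₁ : ℤ, W ξ₁ * Vn (ξ - ξ₁)) :=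
            mul_le_mul' (claimA ξ) (claimA ξ)
        _ = 4 * ((∑' ξ₁ : ℤ, W ξ₁ * Vn (ξ - ξ₁)) * (∑' ξ₁ : ℤ, W ξ₁ * Vn (ξ - ξ₁))) := by
            ring
    calc ∑' ξ : ℤ, ENNReal.ofReal (‖S ξ‖^2)
        ≤ ∑' ξ : ℤ, 4 * (∑' ξ₁ : ℤ, W ξ₁ * Vn (ξ - ξ₁)) ^ (2:ℝ) :=
          ENNReal.tsum_le_tsum step
      _ = 4 * ∑' ξ : ℤ, (∑' ξ₁ : ℤ, W ξ₁ * Vn (ξ - ξ₁)) ^ (2:ℝ) := ENNReal.tsum_mul_left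
      _ ≤ 4 * (((∑' i, W i) * ∑' i, W i) * ∑' i, Vn i ^ (2:ℝ)) := by
          exact mul_le_mul_right (conv_sq W Vn) 4
      _ ≤ 4 * ((ENNReal.ofReal Jr * ENNReal.ofReal X) * ENNReal.ofReal Y) := by
          apply mul_le_mul_right
          rw [hVsum]
          exact mul_le_mul_left hWsq _
      _ = ENNReal.ofReal (C^2) * ENNReal.ofReal X * ENNReal.ofReal Y := by
          rw [hC2]
          rw [ENNReal.ofReal_mul (by norm_num : (0:ℝ) ≤ 4)]
          have h4 : ENNReal.ofReal (4:ℝ) = 4 := by norm_num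
          rw [h4]
          ring
  -- back to the reals
  by_cases hSsum : Summable (fun ξ : ℤ => ‖S ξ‖^2)
  · have hofReal : ENNReal.ofReal (∑' ξ : ℤ, ‖S ξ‖^2) ≤ ENNReal.ofReal (C^2 * X * Y) := by
      rw [ENNReal.ofReal_tsum_of_nonneg (fun i => by positivity) hSsum]
      calc ∑' ξ : ℤ, ENNReal.ofReal (‖S ξ‖^2)
          ≤ ENNReal.ofReal (C^2) * ENNReal.ofReal X * ENNReal.ofReal Y := hmainE
        _ = ENNReal.ofReal (C^2 * X * Y) := by
          rw [ENNReal.ofReal_mul (by positivity), ENNReal.ofReal_mul (by positivity)]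
    have hreal : (∑' ξ : ℤ, ‖S ξ‖^2) ≤ C^2 * X * Y := by
      have := (ENNReal.ofReal_le_ofReal_iff (by positivity)).mp hofReal
      exact this
    have hnn : 0 ≤ ∑' ξ : ℤ, ‖S ξ‖^2 := tsum_nonneg (fun _ => by positivity)
    calc (∑' ξ : ℤ, ‖S ξ‖^2) ^ ((1:ℝ)/2)
        ≤ (C^2 * X * Y) ^ ((1:ℝ)/2) := Real.rpow_le_rpow hnn hreal (by norm_num)
      _ = C * X ^ ((1:ℝ)/2) * Y ^ ((1:ℝ)/2) := by
          rw [← Real.sqrt_eq_rpow, ← Real.sqrt_eq_rpow, ← Real.sqrt_eq_rpow]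
          rw [Real.sqrt_mul (by positivity), Real.sqrt_mul (by positivity),
            Real.sqrt_sq hCpos.le]
  · have : (∑' ξ : ℤ, ‖S ξ‖^2) = 0 := tsum_eq_zero_of_not_summable hSsum
    rw [this, Real.zero_rpow (by norm_num)]
    have h1 : (0:ℝ) ≤ X ^ ((1:ℝ)/2) := Real.rpow_nonneg hXnn _
    have h2 : (0:ℝ) ≤ Y ^ ((1:ℝ)/2) := Real.rpow_nonneg hYnn _
    positivity
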